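/- Let G be a finite simple graph that is triangle-free, has exactly 22 edges, and in which every vertex has degree at least 3. Then every vertex of G has degree at most 7. -/

import Mathlib

theorem stmt_2 {V : Type*} [Fintype V] [DecidableEq V] (G : SimpleGraph V)
    [DecidableRel G.Adj]
    (htf : G.CliqueFree 3)
    (hcard : G.edgeFinset.card = 22)
    (hmin : ∀ v : V, 3 ≤ G.degree v) :
    ∀ v : V, G.degree v ≤ 7 := by
  intro v
  by_contra h
  push_neg at h
  set S := G.neighborFinset v with hS
  have key : ∑ u ∈ S, G.degree u ≤ G.edgeFinset.card := by
    have hcs : (S.sigma (fun u => G.neighborFinset u)).card = ∑ u ∈ S, G.degree u := by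
      rw [Finset.card_sigma]
      rfl
    rw [← hcs]
    apply Finset.card_le_card_of_injOn (fun p => s(p.1, p.2))
    · rintro ⟨u, w⟩ hm
      simp only [Finset.mem_coe, Finset.mem_sigma, SimpleGraph.mem_neighborFinset] at hm ⊢
      rw [SimpleGraph.mem_edgeFinset, SimpleGraph.mem_edgeSet]
      exact hm.2
    · rintro ⟨u, w⟩ hm ⟨u', w'⟩ hm' heq
      simp only [Finset.mem_coe, Finset.mem_sigma, SimpleGraph.mem_neighborFinset, hS] at hm hm'
      simp only [Sym2.eq_iff] at heq
      rcases heq with ⟨h1, h2⟩ | ⟨h1, h2⟩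
      · subst h1; subst h2; rfl
      · subst h1; subst h2
        exact absurd (SimpleGraph.is3Clique_triple_iff.mpr ⟨hm.1, hm'.1, hm.2⟩) (htf _)
  have hlb : 3 * G.degree v ≤ ∑ u ∈ S, G.degree u := by
    calc 3 * G.degree v = ∑ _u ∈ S, 3 := by
          rw [Finset.sum_const, SimpleGraph.card_neighborFinset_eq_degree, smul_eq_mul, mul_comm]
      _ ≤ ∑ u ∈ S, G.degree u := Finset.sum_le_sum fun u _ => hmin u
  omega
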